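/- arXiv:2504.19671 — 2 statements merged into one kernel-verified Lean document; each statement's English description precedes it below -/
import Mathlib

section
/- For p ≥ 3, the general position number of the Sierpiński graph S_p^2 equals (p+1)²/4 if p is odd and p(p+2)/4 if p is even. -/
open SimpleGraph

/-- A walk is a shortest path: it is a path whose length equals the graph distance. -/
def IsShortest {V : Type*} (G : SimpleGraph V) {u v : V} (p : G.Walk u v) : Prop :=
  p.IsPath ∧ p.length = G.dist u v

/-- `u` and `v` are `X`-visible: some shortest `u,v`-path meets `X` only in `{u,v}`. -/
def Visible {V : Type*} (G : SimpleGraph V) (X : Set V) (u v : V) : Prop :=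
  ∃ p : G.Walk u v, IsShortest G p ∧ ∀ w ∈ p.support, w ∈ X → w = u ∨ w = v

/-- `u` and `v` are `X`-positionable: every shortest `u,v`-path meets `X` only in `{u,v}`. -/
def Positionable {V : Type*} (G : SimpleGraph V) (X : Set V) (u v : V) : Prop :=
  ∀ p : G.Walk u v, IsShortest G p → ∀ w ∈ p.support, w ∈ X → w = u ∨ w = v

def MutualVisibilitySet {V : Type*} (G : SimpleGraph V) (X : Set V) : Prop :=
  ∀ u ∈ X, ∀ v ∈ X, Visible G X u v

def TotalMVSet {V : Type*} (G : SimpleGraph V) (X : Set V) : Prop :=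
  ∀ u v : V, Visible G X u v

def OuterMVSet {V : Type*} (G : SimpleGraph V) (X : Set V) : Prop :=
  MutualVisibilitySet G X ∧ ∀ u ∈ X, ∀ v ∉ X, Visible G X u v

def DualMVSet {V : Type*} (G : SimpleGraph V) (X : Set V) : Prop :=
  MutualVisibilitySet G X ∧ ∀ u ∉ X, ∀ v ∉ X, Visible G X u v

def GeneralPositionSet {V : Type*} (G : SimpleGraph V) (X : Set V) : Prop :=
  ∀ u ∈ X, ∀ v ∈ X, Positionable G X u v

def TotalGPSet {V : Type*} (G : SimpleGraph V) (X : Set V) : Prop :=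
  ∀ u v : V, Positionable G X u v

def OuterGPSet {V : Type*} (G : SimpleGraph V) (X : Set V) : Prop :=
  GeneralPositionSet G X ∧ ∀ u ∈ X, ∀ v ∉ X, Positionable G X u v

def DualGPSet {V : Type*} (G : SimpleGraph V) (X : Set V) : Prop :=
  GeneralPositionSet G X ∧ ∀ u ∉ X, ∀ v ∉ X, Positionable G X u v

/-- The maximum cardinality of a set of vertices satisfying `P`. -/
noncomputable def maxCard {V : Type*} (P : Set V → Prop) : ℕ :=
  sSup {n : ℕ | ∃ X : Set V, P X ∧ X.ncard = n}

/-- The number of sets achieving `maxCard P`. -/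
noncomputable def numMaxSets {V : Type*} (P : Set V → Prop) : ℕ :=
  {X : Set V | P X ∧ X.ncard = maxCard P}.ncard

/-- A vertex is simplicial if its neighborhood induces a complete graph. -/
def Simplicial {V : Type*} (G : SimpleGraph V) (v : V) : Prop :=
  ∀ u w : V, G.Adj v u → G.Adj v w → u ≠ w → G.Adj u w

/-- A set of vertices is convex: every shortest path between its vertices stays inside it. -/
def ConvexSet {V : Type*} (G : SimpleGraph V) (S : Set V) : Prop :=
  ∀ u ∈ S, ∀ v ∈ S, ∀ p : G.Walk u v, IsShortest G p → ∀ w ∈ p.support, w ∈ S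

/-- The Sierpiński graph `S_p^2` on vertex set `[p]_0 × [p]_0`:
`(i,j) ~ (i,j')` for `j ≠ j'`, and `(i,j) ~ (j,i)` for `i ≠ j`. -/
def SP2 (p : ℕ) : SimpleGraph (Fin p × Fin p) where
  Adj u v := (u.1 = v.1 ∧ u.2 ≠ v.2) ∨ (v.1 = u.2 ∧ v.2 = u.1 ∧ u.1 ≠ u.2)
  symm := ⟨by
    rintro ⟨a, b⟩ ⟨c, d⟩ (⟨h1, h2⟩ | ⟨h1, h2, h3⟩) <;> simp_all <;> tauto⟩
  loopless := ⟨by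
    rintro ⟨a, b⟩ (⟨h1, h2⟩ | ⟨h1, h2, h3⟩) <;> simp_all⟩

variable {p : ℕ}

lemma adjL {i j k : Fin p} (h : j ≠ k) : (SP2 p).Adj (i, j) (i, k) := Or.inl ⟨rfl, h⟩
lemma adjX {i j : Fin p} (h : i ≠ j) : (SP2 p).Adj (i, j) (j, i) := Or.inr ⟨rfl, rfl, h⟩

/-- The canonical length-3 walk. -/
def walk3 {i j k l : Fin p} (hik : i ≠ k) (hjk : j ≠ k) (hli : l ≠ i) :
    (SP2 p).Walk (i, j) (k, l) :=
  .cons (adjL hjk) (.cons (adjX hik) (.cons (adjL hli.symm) .nil))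

@[simp] lemma walk3_length {i j k l : Fin p} (hik : i ≠ k) (hjk : j ≠ k) (hli : l ≠ i) :
    (walk3 hik hjk hli).length = 3 := rfl

lemma sp2_dist3 {i j k l : Fin p} (hik : i ≠ k) (hjk : j ≠ k) (hli : l ≠ i) :
    (SP2 p).dist (i, j) (k, l) = 3 := by
  refine le_antisymm (by simpa using SimpleGraph.dist_le (walk3 hik hjk hli)) ?_
  by_contra hcon
  push_neg at hcon
  have hne : ((i, j) : Fin p × Fin p) ≠ (k, l) := by simp [hik]
  have h0 : (SP2 p).dist (i, j) (k, l) ≠ 0 := by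
    simp only [ne_eq, SimpleGraph.dist_eq_zero_iff_eq_or_not_reachable, not_or, not_not]
    exact ⟨hne, ⟨walk3 hik hjk hli⟩⟩
  obtain ⟨q, hq⟩ := SimpleGraph.exists_walk_of_dist_ne_zero h0
  cases q with
  | nil => simp at hq; omega
  | cons h q' =>
    rename_i a
    cases q' with
    | nil =>
      rcases h with ⟨h1, h2⟩ | ⟨h1, h2, h3⟩
      · exact hik h1
      · exact hjk h1.symm
    | cons h' q'' =>
      rename_i b
      have hlen : q''.length = 0 := by
        simp only [SimpleGraph.Walk.length_cons] at hq; omega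
      have hb := SimpleGraph.Walk.eq_of_length_eq_zero hlen
      subst hb
      obtain ⟨a1, a2⟩ := a
      rcases h with ⟨h1, h2⟩ | ⟨h1, h2, h3⟩ <;>
        rcases h' with ⟨h1', h2'⟩ | ⟨h1', h2', h3'⟩
      · exact hik (h1.trans h1')
      · exact hli (h2'.trans h1.symm)
      · exact hjk (h1.symm.trans h1')
      · exact hik (h1'.trans h2).symm

lemma sp2_dist2 {i i' j' : Fin p} (h : i ≠ i') (h2 : j' ≠ i) :
    (SP2 p).dist (i, i') (i', j') = 2 := by
  have hw : (SP2 p).Walk (i, i') (i', j') := .cons (adjX h) (.cons (adjL h2.symm) .nil)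
  have hle : (SP2 p).dist (i, i') (i', j') ≤ 2 := by
    have := SimpleGraph.dist_le (Walk.cons (adjX h) (Walk.cons (adjL h2.symm) Walk.nil))
    simpa using this
  refine le_antisymm hle ?_
  by_contra hcon
  push_neg at hcon
  have hne : ((i, i') : Fin p × Fin p) ≠ (i', j') := by simp [h]
  have h0 : (SP2 p).dist (i, i') (i', j') ≠ 0 := by
    simp only [ne_eq, SimpleGraph.dist_eq_zero_iff_eq_or_not_reachable, not_or, not_not]
    exact ⟨hne, ⟨hw⟩⟩
  obtain ⟨q, hq⟩ := SimpleGraph.exists_walk_of_dist_ne_zero h0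
  cases q with
  | nil => simp at hq; omega
  | cons hh q' =>
    have hlen : q'.length = 0 := by
      simp only [SimpleGraph.Walk.length_cons] at hq; omega
    have hb := SimpleGraph.Walk.eq_of_length_eq_zero hlen
    subst hb
    rcases hh with ⟨h1, h2'⟩ | ⟨h1, h2', h3⟩
    · exact h h1
    · exact h2 h2'

lemma dist_add_dist_le_of_mem_support {V : Type*} [DecidableEq V] {G : SimpleGraph V}
    {u v w : V} (q : G.Walk u v) (hw : w ∈ q.support) :
    G.dist u w + G.dist w v ≤ q.length := by
  have h1 := SimpleGraph.dist_le (q.takeUntil w hw)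
  have h2 := SimpleGraph.dist_le (q.dropUntil w hw)
  have h3 := congrArg SimpleGraph.Walk.length (q.take_spec hw)
  rw [SimpleGraph.Walk.length_append] at h3
  omega

lemma dist_pos_of_mem_support_left {V : Type*} [DecidableEq V] {G : SimpleGraph V}
    {u v w : V} (q : G.Walk u v) (hw : w ∈ q.support) (hne : u ≠ w) :
    0 < G.dist u w :=
  ((q.takeUntil w hw).reachable).pos_dist_of_ne hne

lemma dist_pos_of_mem_support_right {V : Type*} [DecidableEq V] {G : SimpleGraph V}
    {u v w : V} (q : G.Walk u v) (hw : w ∈ q.support) (hne : w ≠ v) :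
    0 < G.dist w v :=
  ((q.dropUntil w hw).reachable).pos_dist_of_ne hne

def gpF (p s : ℕ) : Finset (Fin p × Fin p) :=
  Finset.univ.filter fun x => x.1.val < s ∧ (s ≤ x.2.val ∨ x.2 = x.1)

lemma mem_gpF {p s : ℕ} {x : Fin p × Fin p} :
    x ∈ gpF p s ↔ x.1.val < s ∧ (s ≤ x.2.val ∨ x.2 = x.1) := by
  simp [gpF]

lemma gp_main (p s : ℕ) : GeneralPositionSet (SP2 p) ↑(gpF p s) := by
  have key : ∀ {a b c : Fin p}, (s ≤ b.val ∨ b = a) → a.val < s → c.val < s →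
      c ≠ a → b ≠ c := by
    rintro a b c (hb | rfl) ha hc hca
    · intro h; subst h; omega
    · exact fun h => hca (h.symm)
  rintro ⟨i, j⟩ hu ⟨i', j'⟩ hv q ⟨hqp, hql⟩ ⟨k, l⟩ hw hwX
  by_contra hcon
  push_neg at hcon
  obtain ⟨hwu, hwv⟩ := hcon
  rw [Finset.mem_coe, mem_gpF] at hu hv hwX
  obtain ⟨hi, hj⟩ := hu
  obtain ⟨hi', hj'⟩ := hv
  obtain ⟨hk, hl⟩ := hwX
  have hsum := dist_add_dist_le_of_mem_support q hw
  rw [hql] at hsum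
  have hpos1 := dist_pos_of_mem_support_left q hw (Ne.symm hwu)
  have hpos2 := dist_pos_of_mem_support_right q hw hwv
  rcases eq_or_ne i i' with rfl | hii'
  · -- same block : dist ≤ 1
    have hle : (SP2 p).dist (i, j) (i, j') ≤ 1 := by
      rcases eq_or_ne j j' with rfl | hjj'
      · simp [SimpleGraph.dist_self]
      · simpa using SimpleGraph.dist_le (Walk.cons (adjL (i := i) hjj') (Walk.nil))
    omega
  · have hji' : j ≠ i' := key hj hi hi' (Ne.symm hii')
    have hj'i : j' ≠ i := key hj' hi' hi hii'
    rw [sp2_dist3 hii' hji' hj'i] at hsum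
    rcases eq_or_ne k i with rfl | hki
    · -- w in block of u
      have hli' : l ≠ i' := key hl hk hi' (Ne.symm hii')
      have : (SP2 p).dist (k, l) (i', j') = 3 := sp2_dist3 hii' hli' hj'i
      omega
    · rcases eq_or_ne k i' with rfl | hki'
      · have hli : l ≠ i := key hl hk hi (Ne.symm hki)
        have : (SP2 p).dist (i, j) (k, l) = 3 := sp2_dist3 (Ne.symm hki) hji' hli
        omega
      · have hjk : j ≠ k := key hj hi hk hki
        have hli : l ≠ i := key hl hk hi (Ne.symm hki)
        have : (SP2 p).dist (i, j) (k, l) = 3 := sp2_dist3 (Ne.symm hki) hjk hli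
        omega

lemma filter_ge_eq_Ici {p s : ℕ} (hsp : s < p) :
    (Finset.univ.filter fun j : Fin p => s ≤ j.val) = Finset.Ici (⟨s, hsp⟩ : Fin p) := by
  ext j
  simp [Fin.le_def]

lemma gpF_card {p s : ℕ} (hsp : s < p) : (gpF p s).card = s * (p - s + 1) := by
  classical
  rw [Finset.card_eq_sum_card_fiberwise
    (f := Prod.fst) (t := Finset.univ) (fun x _ => Finset.mem_univ _)]
  have hfib : ∀ i : Fin p, ((gpF p s).filter fun x => x.1 = i).card
      = if i.val < s then p - s + 1 else 0 := by
    intro i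
    split_ifs with hi
    · have himg : ((gpF p s).filter fun x => x.1 = i)
          = (Finset.univ.filter fun j : Fin p => s ≤ j.val ∨ j = i).map
              ⟨fun j => (i, j), fun a b h => by simpa using h⟩ := by
        ext ⟨a, b⟩
        simp only [Finset.mem_filter, mem_gpF, Finset.mem_map, Finset.mem_univ, true_and,
          Function.Embedding.coeFn_mk, Prod.mk.injEq]
        constructor
        · rintro ⟨⟨ha, hb⟩, rfl⟩
          exact ⟨b, by tauto, rfl⟩
        · rintro ⟨j, hj, rfl, rfl⟩
          exact ⟨⟨hi, by tauto⟩, rfl⟩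
      rw [himg, Finset.card_map]
      have hins : (Finset.univ.filter fun j : Fin p => s ≤ j.val ∨ j = i)
          = insert i (Finset.univ.filter fun j : Fin p => s ≤ j.val) := by
        ext j
        simp only [Finset.mem_filter, Finset.mem_univ, true_and, Finset.mem_insert]
        tauto
      rw [hins, Finset.card_insert_of_notMem (by simp; omega), filter_ge_eq_Ici hsp,
        Fin.card_Ici]
    · rw [Finset.card_eq_zero, Finset.filter_eq_empty_iff]
      rintro ⟨a, b⟩ hab
      rw [mem_gpF] at hab
      intro h
      exact hi (h ▸ hab.1)
  rw [Finset.sum_congr rfl (fun i _ => hfib i), Finset.sum_ite, Finset.sum_const,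
    Finset.sum_const_zero, add_zero]
  have : (Finset.univ.filter fun i : Fin p => i.val < s) = Finset.Iio (⟨s, hsp⟩ : Fin p) := by
    ext j
    simp [Fin.lt_def]
  rw [this, Fin.card_Iio, smul_eq_mul]

@[simp] lemma walk3_support {i j k l : Fin p} (hik : i ≠ k) (hjk : j ≠ k) (hli : l ≠ i) :
    (walk3 hik hjk hli).support = [(i, j), (i, k), (k, i), (k, l)] := rfl

lemma star {X : Set (Fin p × Fin p)} (hX : GeneralPositionSet (SP2 p) X)
    {i i' j j1 j2 : Fin p} (hii' : i ≠ i') (hj : (i, j) ∈ X)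
    (hj1 : (i', j1) ∈ X) (hj2 : (i', j2) ∈ X) (hj12 : j1 ≠ j2) :
    (i', i) ∉ X := by
  intro hIn
  obtain ⟨j', hj', hj'i⟩ : ∃ j', (i', j') ∈ X ∧ j' ≠ i := by
    rcases eq_or_ne j1 i with rfl | h
    · exact ⟨j2, hj2, fun h => hj12 h.symm⟩
    · exact ⟨j1, hj1, h⟩
  rcases eq_or_ne j i' with hji | hji'
  · subst hji
    have hmem := hX _ hj _ hj'
      (Walk.cons (adjX hii') (Walk.cons (adjL (Ne.symm hj'i)) Walk.nil))
      ⟨by simp [Walk.isPath_def, Prod.ext_iff]; tauto,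
       by simp [sp2_dist2 hii' hj'i]⟩
      (j, i) (by simp) hIn
    rcases hmem with h | h
    · exact hii' (congrArg Prod.fst h).symm
    · exact hj'i (congrArg Prod.snd h).symm
  · have hmem := hX _ hj _ hj' (walk3 hii' hji' hj'i)
      ⟨by rw [Walk.isPath_def, walk3_support]; simp [Prod.ext_iff]; tauto,
       by simp [sp2_dist3 hii' hji' hj'i]⟩
      (i', i) (by rw [walk3_support]; simp) hIn
    rcases hmem with h | h
    · exact hii' (congrArg Prod.fst h).symm
    · exact hj'i (congrArg Prod.snd h).symm

lemma upper_bound {X : Set (Fin p × Fin p)} (hX : GeneralPositionSet (SP2 p) X) :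
    ∃ n ≤ p, X.ncard ≤ n * (p - n + 1) := by
  classical
  set F := X.toFinite.toFinset with hF
  have hmemF : ∀ x, x ∈ F ↔ x ∈ X := fun x => Set.Finite.mem_toFinset _
  have hcard : X.ncard = F.card := Set.ncard_eq_toFinset_card X X.toFinite
  set c : Fin p → ℕ := fun i => (F.filter (fun x => x.1 = i)).card with hc
  set N := Finset.univ.filter (fun i => 0 < c i) with hN
  have hNp : N.card ≤ p := le_trans (Finset.card_le_univ N) (by simp)
  refine ⟨N.card, hNp, ?_⟩
  have hsplit : F.card = ∑ i, c i :=
    Finset.card_eq_sum_card_fiberwise (fun x _ => Finset.mem_univ _)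
  have hbound : ∀ i ∈ N, c i ≤ p - N.card + 1 := by
    intro i hi
    by_cases hbig : 2 ≤ c i
    · set A := (F.filter (fun x => x.1 = i)).image Prod.snd with hA
      have hAc : A.card = c i := by
        apply Finset.card_image_of_injOn
        intro x hx y hy hxy
        rw [Finset.mem_coe, Finset.mem_filter] at hx hy
        exact Prod.ext (hx.2.trans hy.2.symm) hxy
      have hsub : A ⊆ insert i (Finset.univ \ N) := by
        intro j hjA
        rcases eq_or_ne j i with rfl | hji
        · exact Finset.mem_insert_self _ _
        · refine Finset.mem_insert_of_mem (Finset.mem_sdiff.mpr ⟨Finset.mem_univ _, ?_⟩)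
          intro hjN
          rw [hN, Finset.mem_filter, Finset.card_pos] at hjN
          obtain ⟨x, hx⟩ := hjN.2
          rw [Finset.mem_filter] at hx
          have hxX : (j, x.2) ∈ X := by
            rw [← hmemF, show ((j, x.2) : Fin p × Fin p) = x from Prod.ext hx.2.symm rfl]
            exact hx.1
          obtain ⟨a, ha, b, hb, hab⟩ := Finset.one_lt_card.mp hbig
          rw [Finset.mem_filter] at ha hb
          have haX : (i, a.2) ∈ X := by
            rw [← hmemF, show ((i, a.2) : Fin p × Fin p) = a from Prod.ext ha.2.symm rfl]
            exact ha.1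
          have hbX : (i, b.2) ∈ X := by
            rw [← hmemF, show ((i, b.2) : Fin p × Fin p) = b from Prod.ext hb.2.symm rfl]
            exact hb.1
          have hab2 : a.2 ≠ b.2 := by
            intro h
            exact hab (Prod.ext (ha.2.trans hb.2.symm) h)
          have hnotin := star hX hji hxX haX hbX hab2
          rw [Finset.mem_image] at hjA
          obtain ⟨y, hy, hy2⟩ := hjA
          rw [Finset.mem_filter] at hy
          apply hnotin
          rw [← hmemF]
          have : y = (i, j) := Prod.ext hy.2 hy2
          rw [← this]
          exact hy.1
      have h1 : A.card ≤ (insert i (Finset.univ \ N)).card := Finset.card_le_card hsub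
      have h2 : (insert i (Finset.univ \ N)).card ≤ (Finset.univ \ N).card + 1 :=
        Finset.card_insert_le _ _
      have h3 : (Finset.univ \ N).card = p - N.card := by
        rw [Finset.card_sdiff_of_subset (Finset.subset_univ N)]
        simp
      omega
    · omega
  have hzero : ∑ i, c i = ∑ i ∈ N, c i := by
    rw [hN]
    exact (Finset.sum_filter_of_ne (fun i _ hne => Nat.pos_of_ne_zero hne)).symm
  have hle : ∑ i ∈ N, c i ≤ N.card * (p - N.card + 1) :=
    Finset.sum_le_card_nsmul N c _ hbound
  omega

lemma arith_le {p n : ℕ} (hnp : n ≤ p) :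
    n * (p - n + 1) ≤ if Odd p then (p + 1) ^ 2 / 4 else p * (p + 2) / 4 := by
  obtain ⟨q, hq, hq2⟩ : ∃ q, n + q = p + 1 ∧ p - n + 1 = q := ⟨p + 1 - n, by omega, by omega⟩
  rw [hq2]
  have key : 4 * (n * q) ≤ (p + 1) ^ 2 := by
    have hz : (4 : ℤ) * (n * q) ≤ ((n : ℤ) + q) ^ 2 := by nlinarith [sq_nonneg ((n : ℤ) - q)]
    have h2 : ((n : ℤ) + q) = (p : ℤ) + 1 := by exact_mod_cast congrArg (Nat.cast (R := ℤ)) hq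
    rw [h2] at hz
    exact_mod_cast hz
  split_ifs with hodd
  · obtain ⟨m, rfl⟩ := hodd
    have e1 : (2 * m + 1 + 1) ^ 2 = 4 * ((m + 1) ^ 2) := by ring
    rw [e1, Nat.mul_div_cancel_left _ (by norm_num)]
    rw [e1] at key
    exact Nat.le_of_mul_le_mul_left key (by norm_num)
  · obtain ⟨m, rfl⟩ := Nat.not_odd_iff_even.mp hodd
    have e1 : (m + m) * ((m + m) + 2) = 4 * (m * m + m) := by ring
    rw [e1, Nat.mul_div_cancel_left _ (by norm_num)]
    have e2 : (m + m + 1) ^ 2 = 4 * (m * m + m) + 1 := by ring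
    rw [e2] at key
    have hpar : n % 2 = 0 ∨ q % 2 = 0 := by omega
    rcases hpar with h | h
    · obtain ⟨a, rfl⟩ : ∃ a, n = a + a := ⟨n / 2, by omega⟩
      have e3 : (a + a) * q = 2 * (a * q) := by ring
      rw [e3] at key ⊢
      generalize a * q = XX at key ⊢
      generalize m * m + m = MM at key ⊢
      omega
    · obtain ⟨a, rfl⟩ : ∃ a, q = a + a := ⟨q / 2, by omega⟩
      have e3 : n * (a + a) = 2 * (n * a) := by ring
      rw [e3] at key ⊢
      generalize n * a = XX at key ⊢
      generalize m * m + m = MM at key ⊢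
      omega

lemma arith_eq {p : ℕ} (hp : 3 ≤ p) :
    ((p + 1) / 2) * (p - (p + 1) / 2 + 1) =
      if Odd p then (p + 1) ^ 2 / 4 else p * (p + 2) / 4 := by
  split_ifs with hodd
  · obtain ⟨m, rfl⟩ := hodd
    have h1 : (2 * m + 1 + 1) / 2 = m + 1 := by omega
    have h2 : 2 * m + 1 - (m + 1) + 1 = m + 1 := by omega
    rw [h1, h2, show (2 * m + 1 + 1) ^ 2 = 4 * ((m + 1) * (m + 1)) by ring,
      Nat.mul_div_cancel_left _ (by norm_num)]
  · obtain ⟨m, rfl⟩ := Nat.not_odd_iff_even.mp hodd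
    have h1 : (m + m + 1) / 2 = m := by omega
    have h2 : m + m - m + 1 = m + 1 := by omega
    rw [h1, h2, show (m + m) * ((m + m) + 2) = 4 * (m * (m + 1)) by ring,
      Nat.mul_div_cancel_left _ (by norm_num)]


/-- The general position number of `S_p^2`. -/
theorem stmt_7 (p : ℕ) (hp : 3 ≤ p) :
    maxCard (GeneralPositionSet (SP2 p)) =
      if Odd p then (p + 1) ^ 2 / 4 else p * (p + 2) / 4 := by
  have hsp : (p + 1) / 2 < p := by omega
  unfold maxCard
  apply IsGreatest.csSup_eq
  constructor
  · refine ⟨↑(gpF p ((p + 1) / 2)), gp_main p _, ?_⟩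
    rw [Set.ncard_coe_finset, gpF_card hsp]
    exact arith_eq hp
  · rintro m ⟨X, hXgp, rfl⟩
    obtain ⟨n, hnp, hle⟩ := upper_bound hXgp
    exact hle.trans (arith_le hnp)
end

section
/- For p ≥ 3, the dual general position number of the Sierpiński graph S_p^2 equals p, and the diagonal {(i,i) : i ∈ [p]_0} is the unique maximum dual general position set. -/
open SimpleGraph

namespace SP2Aux

variable {p : ℕ}

lemma adj_iff {u v : Fin p × Fin p} :
    (SP2 p).Adj u v ↔ (u.1 = v.1 ∧ u.2 ≠ v.2) ∨ (v.1 = u.2 ∧ v.2 = u.1 ∧ u.1 ≠ u.2) :=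
  Iff.rfl

lemma adj_intra {i j j' : Fin p} (h : j ≠ j') : (SP2 p).Adj (i, j) (i, j') :=
  Or.inl ⟨rfl, h⟩

lemma adj_bridge {i j : Fin p} (h : i ≠ j) : (SP2 p).Adj (i, j) (j, i) :=
  Or.inr ⟨rfl, rfl, h⟩

/-- The distance formula for `SP2 p`. -/
def d2 (u v : Fin p × Fin p) : ℕ :=
  if u.1 = v.1 then (if u.2 = v.2 then 0 else 1)
  else 1 + (if u.2 = v.1 then 0 else 1) + (if v.2 = u.1 then 0 else 1)

lemma exists_walk (u v : Fin p × Fin p) : ∃ w : (SP2 p).Walk u v, w.length = d2 u v := by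
  obtain ⟨i, j⟩ := u; obtain ⟨i', j'⟩ := v
  by_cases h1 : i = i'
  · subst h1
    by_cases h2 : j = j'
    · subst h2; exact ⟨Walk.nil, by simp [d2]⟩
    · exact ⟨Walk.cons (adj_intra h2) Walk.nil, by simp [d2, h2]⟩
  · by_cases h2 : j = i'
    · subst h2
      by_cases h3 : j' = i
      · subst h3; exact ⟨Walk.cons (adj_bridge h1) Walk.nil, by simp [d2, h1]⟩
      · exact ⟨Walk.cons (adj_bridge h1) (Walk.cons (adj_intra (Ne.symm h3)) Walk.nil),
          by simp [d2, h1, h3]⟩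
    · by_cases h3 : j' = i
      · subst h3
        exact ⟨Walk.cons (adj_intra h2) (Walk.cons (adj_bridge h1) Walk.nil),
          by simp [d2, h1, h2]⟩
      · exact ⟨Walk.cons (adj_intra h2)
          (Walk.cons (adj_bridge h1) (Walk.cons (adj_intra (Ne.symm h3)) Walk.nil)),
          by simp [d2, h1, h2, h3]⟩

lemma reach (u v : Fin p × Fin p) : (SP2 p).Reachable u v :=
  (exists_walk u v).elim fun w _ => ⟨w⟩

lemma no_mid {i j i' j' : Fin p} (h1 : i ≠ i') (h2 : j ≠ i') (h3 : j' ≠ i)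
    (x : Fin p × Fin p) (ha : (SP2 p).Adj (i, j) x) (hb : (SP2 p).Adj x (i', j')) : False := by
  obtain ⟨x1, x2⟩ := x
  rw [adj_iff] at ha hb
  rcases ha with ⟨e1, e2⟩ | ⟨e1, e2, e3⟩ <;> rcases hb with ⟨f1, f2⟩ | ⟨f1, f2, f3⟩ <;>
    simp_all

lemma walk_short {W : Type*} {G : SimpleGraph W} {u v : W} (q : G.Walk u v)
    (h : q.length ≤ 2) : u = v ∨ G.Adj u v ∨ ∃ x, G.Adj u x ∧ G.Adj x v := by
  match q with
  | .nil => exact Or.inl rfl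
  | .cons h1 .nil => exact Or.inr (Or.inl h1)
  | .cons h1 (.cons h2 .nil) => exact Or.inr (Or.inr ⟨_, h1, h2⟩)
  | .cons _ (.cons _ (.cons _ _)) => simp [Walk.length_cons] at h

lemma dist_eq (u v : Fin p × Fin p) : (SP2 p).dist u v = d2 u v := by
  obtain ⟨w, hw⟩ := exists_walk u v
  refine le_antisymm (hw ▸ SimpleGraph.dist_le w) ?_
  obtain ⟨i, j⟩ := u; obtain ⟨i', j'⟩ := v
  have hne0 : ∀ (a b : Fin p × Fin p), a ≠ b → 1 ≤ (SP2 p).dist a b := fun a b hab =>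
    (reach a b).pos_dist_of_ne hab
  by_cases h1 : i = i'
  · subst h1
    by_cases h2 : j = j'
    · simp [d2, h2]
    · have := hne0 (i, j) (i, j') (by simp [h2])
      simp only [d2]
      simp only [h2, if_neg h2, ite_false, ite_true, Prod.fst, Prod.snd, if_pos rfl]
      omega
  · by_cases h2 : j = i' <;> by_cases h3 : j' = i
    · -- adjacent (bridge)
      have : (SP2 p).Adj (i, j) (i', j') := by
        subst h2; subst h3; exact adj_bridge h1
      have hdv : d2 ((i, j) : Fin p × Fin p) (i', j') = 1 := by
        simp [d2, h1, h2, h3]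
      rw [hdv]
      exact hne0 _ _ ((SP2 p).ne_of_adj this)
    · -- distance 2
      have hne : ((i, j) : Fin p × Fin p) ≠ (i', j') := by simp [h1]
      have hnadj : ¬ (SP2 p).Adj (i, j) (i', j') := by
        rintro (⟨e1, e2⟩ | ⟨e1, e2, e3⟩) <;> simp_all
      have d1 := hne0 _ _ hne
      have dne1 : (SP2 p).dist (i, j) (i', j') ≠ 1 :=
        fun hd => hnadj (SimpleGraph.dist_eq_one_iff_adj.mp hd)
      have hdv : d2 ((i, j) : Fin p × Fin p) (i', j') = 2 := by
        simp [d2, h1, h2, h3]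
      rw [hdv]
      omega
    · -- distance 2
      have hne : ((i, j) : Fin p × Fin p) ≠ (i', j') := by simp [h1]
      have hnadj : ¬ (SP2 p).Adj (i, j) (i', j') := by
        rintro (⟨e1, e2⟩ | ⟨e1, e2, e3⟩) <;> simp_all
      have d1 := hne0 _ _ hne
      have dne1 : (SP2 p).dist (i, j) (i', j') ≠ 1 :=
        fun hd => hnadj (SimpleGraph.dist_eq_one_iff_adj.mp hd)
      have hdv : d2 ((i, j) : Fin p × Fin p) (i', j') = 2 := by
        simp [d2, h1, h2, h3]
      rw [hdv]
      omega
    · -- distance 3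
      have hne : ((i, j) : Fin p × Fin p) ≠ (i', j') := by simp [h1]
      have hnadj : ¬ (SP2 p).Adj (i, j) (i', j') := by
        rintro (⟨e1, e2⟩ | ⟨e1, e2, e3⟩) <;> simp_all
      have hle : 3 ≤ (SP2 p).dist (i, j) (i', j') := by
        by_contra hc
        push_neg at hc
        obtain ⟨q, hq⟩ := (reach ((i, j) : Fin p × Fin p) (i', j')).exists_walk_length_eq_dist
        have hq2 : q.length ≤ 2 := by omega
        rcases walk_short q hq2 with h | h | ⟨x, hx1, hx2⟩
        · exact hne h
        · exact hnadj h
        · exact no_mid h1 h2 h3 x hx1 hx2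
      have hdv : d2 ((i, j) : Fin p × Fin p) (i', j') = 3 := by
        simp [d2, h1, h2, h3]
      rw [hdv]
      omega

lemma between {W : Type*} [DecidableEq W] {G : SimpleGraph W} {u v w : W} (q : G.Walk u v)
    (hs : IsShortest G q) (hw : w ∈ q.support) :
    G.dist u w + G.dist w v = G.dist u v := by
  have h1 : G.dist u w ≤ (q.takeUntil w hw).length := SimpleGraph.dist_le _
  have h2 : G.dist w v ≤ (q.dropUntil w hw).length := SimpleGraph.dist_le _
  have h3 : (q.takeUntil w hw).length + (q.dropUntil w hw).length = q.length := by
    rw [← Walk.length_append, Walk.take_spec]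
  obtain ⟨a, ha⟩ := (Walk.reachable (q.takeUntil w hw)).exists_walk_length_eq_dist
  obtain ⟨b, hb⟩ := (Walk.reachable (q.dropUntil w hw)).exists_walk_length_eq_dist
  have h4 : G.dist u v ≤ G.dist u w + G.dist w v := by
    have := SimpleGraph.dist_le (a.append b)
    rwa [Walk.length_append, ha, hb] at this
  have h5 := hs.2
  omega

lemma pos_two {X : Set (Fin p × Fin p)} (u w v : Fin p × Fin p)
    (hpos : Positionable (SP2 p) X u v) (h1 : (SP2 p).Adj u w) (h2 : (SP2 p).Adj w v)
    (hd : d2 u v = 2) (n1 : u ≠ w) (n2 : u ≠ v) (n3 : w ≠ v) (hw : w ∈ X) :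
    w = u ∨ w = v := by
  refine hpos (.cons h1 (.cons h2 .nil)) ⟨?_, ?_⟩ w (by simp) hw
  · simp [Walk.isPath_def, List.nodup_cons, n1, n2, n3]
  · rw [dist_eq, hd]; simp

lemma pos_three {X : Set (Fin p × Fin p)} (u w1 w2 v : Fin p × Fin p)
    (hpos : Positionable (SP2 p) X u v)
    (h1 : (SP2 p).Adj u w1) (h2 : (SP2 p).Adj w1 w2) (h3 : (SP2 p).Adj w2 v)
    (hd : d2 u v = 3) (n1 : u ≠ w1) (n2 : u ≠ w2) (n3 : u ≠ v)
    (n4 : w1 ≠ w2) (n5 : w1 ≠ v) (n6 : w2 ≠ v) (hw : w1 ∈ X) :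
    w1 = u ∨ w1 = v := by
  refine hpos (.cons h1 (.cons h2 (.cons h3 .nil))) ⟨?_, ?_⟩ w1 (by simp) hw
  · simp [Walk.isPath_def, List.nodup_cons, n1, n2, n3, n4, n5, n6]
  · rw [dist_eq, hd]; simp

lemma pne1 {a b c d : Fin p} (h : a ≠ c) : (a, b) ≠ ((c, d) : Fin p × Fin p) :=
  fun hh => h (congrArg Prod.fst hh)

lemma pne2 {a b c d : Fin p} (h : b ≠ d) : (a, b) ≠ ((c, d) : Fin p × Fin p) :=
  fun hh => h (congrArg Prod.snd hh)

/-- The diagonal. -/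
def Diag (p : ℕ) : Set (Fin p × Fin p) := {v | v.1 = v.2}

lemma diag_gp {i i' m : Fin p}
    (h : d2 ((i, i) : Fin p × Fin p) (m, m) + d2 ((m, m) : Fin p × Fin p) (i', i')
      = d2 ((i, i) : Fin p × Fin p) (i', i')) : m = i ∨ m = i' := by
  simp only [d2] at h
  split_ifs at h <;> first
    | omega
    | (left; omega)
    | (right; omega)
    | (left; tauto)
    | (right; tauto)
    | tauto
    | simp_all

lemma diag_dual {i j i' j' m : Fin p} (hj : j ≠ i) (hj' : j' ≠ i')
    (h : d2 ((i, j) : Fin p × Fin p) (m, m) + d2 ((m, m) : Fin p × Fin p) (i', j')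
      = d2 ((i, j) : Fin p × Fin p) (i', j')) : False := by
  simp only [d2] at h
  split_ifs at h <;> first
    | omega
    | tauto
    | simp_all

lemma diag_dualGP : DualGPSet (SP2 p) (Diag p) := by
  constructor
  · rintro ⟨a, a'⟩ ha ⟨b, b'⟩ hb q hq w hwsup hw
    simp only [Diag, Set.mem_setOf_eq] at ha hb
    obtain ⟨m, m'⟩ := w
    simp only [Diag, Set.mem_setOf_eq] at hw
    cases ha; cases hb; cases hw
    have hbtw := between q hq hwsup
    rw [dist_eq, dist_eq, dist_eq] at hbtw
    rcases diag_gp hbtw with h | h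
    · left; rw [h]
    · right; rw [h]
  · rintro ⟨a, a'⟩ ha ⟨b, b'⟩ hb q hq w hwsup hw
    simp only [Diag, Set.mem_setOf_eq] at ha hb
    obtain ⟨m, m'⟩ := w
    simp only [Diag, Set.mem_setOf_eq] at hw
    cases hw
    have hbtw := between q hq hwsup
    rw [dist_eq, dist_eq, dist_eq] at hbtw
    exact absurd hbtw (by
      intro hc
      exact diag_dual (fun h => ha h.symm) (fun h => hb h.symm) hc)

lemma exists_two (hp : 3 ≤ p) (a : Fin p) : ∃ b c : Fin p, b ≠ c ∧ b ≠ a ∧ c ≠ a := by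
  have hcard : 1 < (Finset.univ.erase a).card := by
    rw [Finset.card_erase_of_mem (Finset.mem_univ a), Finset.card_univ, Fintype.card_fin]
    omega
  obtain ⟨b, hb, c, hc, hbc⟩ := Finset.one_lt_card.mp hcard
  exact ⟨b, c, hbc, (Finset.mem_erase.mp hb).1, (Finset.mem_erase.mp hc).1⟩

lemma subset_diag (hp : 3 ≤ p) {X : Set (Fin p × Fin p)} (hX : DualGPSet (SP2 p) X) :
    X ⊆ Diag p := by
  -- Step 1: off-diagonal members come in symmetric pairs
  have pair_mem : ∀ a b : Fin p, a ≠ b → (a, b) ∈ X → (b, a) ∈ X := by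
    intro a b hab hmem
    by_contra hba
    have hblock : ∀ c : Fin p, (a, c) ∈ X := by
      intro c
      by_cases hc : c = b
      · subst hc; exact hmem
      by_contra hac
      rcases pos_two (a, c) (a, b) (b, a) (hX.2 _ hac _ hba) (adj_intra hc) (adj_bridge hab)
        (by simp [d2, hab, hc]) (pne2 hc) (pne1 hab) (pne1 hab) hmem with h | h
      · exact hc ((Prod.ext_iff.mp h).2).symm
      · exact hab (Prod.ext_iff.mp h).1
    have step1c : ∀ e : Fin p, e ≠ a → (e, a) ∈ X → False := by
      intro e hea hmeme
      rcases pos_two (e, a) (a, e) (a, a) (hX.1 _ hmeme _ (hblock a)) (adj_bridge hea)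
        (adj_intra hea) (by simp [d2, hea, Ne.symm hea]) (pne1 hea) (pne1 hea) (pne2 hea)
        (hblock e) with h | h
      · exact hea ((Prod.ext_iff.mp h).1).symm
      · exact hea (Prod.ext_iff.mp h).2
    obtain ⟨b', c', hbc, hb'a, hc'a⟩ := exists_two hp a
    by_cases hb1 : (b', a) ∈ X
    · exact step1c b' hb'a hb1
    by_cases hb2 : (c', a) ∈ X
    · exact step1c c' hc'a hb2
    rcases pos_three (b', a) (a, b') (a, c') (c', a) (hX.2 _ hb1 _ hb2) (adj_bridge hb'a)
      (adj_intra hbc) (adj_bridge (Ne.symm hc'a))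
      (by simp [d2, hbc, Ne.symm hb'a, Ne.symm hc'a])
      (pne1 hb'a) (pne1 hb'a) (pne1 hbc) (pne2 hbc)
      (pne1 (Ne.symm hc'a)) (pne1 (Ne.symm hc'a))
      (hblock b') with h | h
    · exact hb'a ((Prod.ext_iff.mp h).1).symm
    · exact hc'a ((Prod.ext_iff.mp h).1).symm
  -- Step 2: no off-diagonal member at all
  rintro ⟨a, b⟩ hmem
  show a = b
  by_contra hab
  have hba := pair_mem a b hab hmem
  obtain ⟨c, hca, hcb⟩ : ∃ c : Fin p, c ≠ a ∧ c ≠ b := by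
    obtain ⟨b', c', hbc, hb'a, hc'a⟩ := exists_two hp a
    by_cases hbb : b' = b
    · exact ⟨c', hc'a, by rw [← hbb]; exact Ne.symm hbc⟩
    · exact ⟨b', hb'a, hbb⟩
  by_cases h1 : (a, c) ∈ X
  · have hca' := pair_mem a c (Ne.symm hca) h1
    rcases pos_two (c, a) (a, c) (a, b) (hX.1 _ hca' _ hmem) (adj_bridge hca) (adj_intra hcb)
      (by simp [d2, hca, Ne.symm hcb]) (pne1 hca) (pne1 hca) (pne2 hcb) h1 with h | h
    · exact hca ((Prod.ext_iff.mp h).1).symm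
    · exact hcb (Prod.ext_iff.mp h).2
  by_cases h2 : (b, c) ∈ X
  · have hcb' := pair_mem b c (Ne.symm hcb) h2
    rcases pos_two (c, b) (b, c) (b, a) (hX.1 _ hcb' _ hba) (adj_bridge hcb) (adj_intra hca)
      (by simp [d2, hcb, Ne.symm hca]) (pne1 hcb) (pne1 hcb) (pne2 hca) h2 with h | h
    · exact hcb ((Prod.ext_iff.mp h).1).symm
    · exact hca (Prod.ext_iff.mp h).2
  rcases pos_three (a, c) (a, b) (b, a) (b, c) (hX.2 _ h1 _ h2) (adj_intra hcb)
    (adj_bridge hab) (adj_intra (Ne.symm hca))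
    (by simp [d2, hab, hcb, hca])
    (pne2 hcb) (pne1 hab) (pne1 hab) (pne1 hab) (pne1 hab) (pne2 (Ne.symm hca))
    hmem with h | h
  · exact hcb ((Prod.ext_iff.mp h).2).symm
  · exact hab (Prod.ext_iff.mp h).1

lemma ncard_diag : (Diag p).ncard = p := by
  have h : Diag p = (fun i : Fin p => ((i, i) : Fin p × Fin p)) '' Set.univ := by
    ext ⟨x, y⟩
    constructor
    · intro hxy
      have : x = y := hxy
      subst this
      exact ⟨x, Set.mem_univ x, rfl⟩
    · rintro ⟨i, -, hi⟩
      have h1 : i = x := (Prod.ext_iff.mp hi).1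
      have h2 : i = y := (Prod.ext_iff.mp hi).2
      show x = y
      rw [← h1, ← h2]
  rw [h, Set.ncard_image_of_injective _ (fun a b hh => (Prod.ext_iff.mp hh).1),
    Set.ncard_univ, Nat.card_eq_fintype_card, Fintype.card_fin]

end SP2Aux

/-- `gp_d(S_p^2) = p`, and the diagonal is the unique maximum dual general position set. -/
theorem stmt_9 (p : ℕ) (hp : 3 ≤ p) :
    maxCard (DualGPSet (SP2 p)) = p ∧
    {X : Set (Fin p × Fin p) | DualGPSet (SP2 p) X ∧ X.ncard = p} =
      {{v : Fin p × Fin p | v.1 = v.2}} := by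
  classical
  have hDgp : DualGPSet (SP2 p) (SP2Aux.Diag p) := SP2Aux.diag_dualGP
  have hDcard : (SP2Aux.Diag p).ncard = p := SP2Aux.ncard_diag
  have hsub : ∀ X : Set (Fin p × Fin p), DualGPSet (SP2 p) X → X ⊆ SP2Aux.Diag p :=
    fun X hX => SP2Aux.subset_diag hp hX
  have hle : ∀ X : Set (Fin p × Fin p), DualGPSet (SP2 p) X → X.ncard ≤ p := by
    intro X hX
    have := Set.ncard_le_ncard (hsub X hX) (Set.toFinite _)
    rwa [hDcard] at this
  constructor
  · apply IsGreatest.csSup_eq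
    constructor
    · exact ⟨SP2Aux.Diag p, hDgp, hDcard⟩
    · rintro n ⟨X, hX, rfl⟩
      exact hle X hX
  · ext X
    simp only [Set.mem_setOf_eq, Set.mem_singleton_iff]
    constructor
    · rintro ⟨hX, hcard⟩
      refine Set.eq_of_subset_of_ncard_le (hsub X hX) ?_ (Set.toFinite _)
      rw [hcard]
      exact le_of_eq hDcard
    · rintro rfl
      exact ⟨hDgp, hDcard⟩
end
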